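/- Laplace transform of the additive output functional (step 1 of Theorem 3.1): For every f : I → ℝ, every u ∈ ℝ, every state ρ and every n ≥ 1, Σ_{(i_1,…,i_n)∈I^n} exp( u·Σ_{k=1}^n f(i_k) ) · tr(V_{i_n}⋯V_{i_1} ρ V_{i_1}*⋯V_{i_n}*) = tr( ρ · Φ_u^n(1) ) ≤ N_ρ · ‖Φ_u‖₂^n, where Φ_u(x) := Σ_{i∈I} e^{u f(i)} V_i* x V_i and N_ρ := ‖σ^{−1/2} ρ σ^{−1/2}‖₂. -/

import Mathlib

open Matrix MeasureTheory Finset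
open scoped ComplexOrder
noncomputable section

/-- The algebra `M_d(ℂ)` of `d × d` complex matrices. -/
abbrev Md (d : ℕ) := Matrix (Fin d) (Fin d) ℂ

/-- KMS inner product `⟨x,y⟩ = tr(s x* s y)` where `s = σ^{1/2}`. -/
def kmsInner {d : ℕ} (s x y : Md d) : ℂ := (s * xᴴ * s * y).trace

/-- KMS norm `‖x‖₂ = tr(s x* s x)^{1/2}` where `s = σ^{1/2}`. -/
def kmsNorm {d : ℕ} (s x : Md d) : ℝ := Real.sqrt ((s * xᴴ * s * x).trace.re)

/-- Operator norm of a map on `M_d(ℂ)` induced by the KMS norm. -/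
def kmsOpNorm {d : ℕ} (s : Md d) (η : Md d → Md d) : ℝ :=
  sInf {C : ℝ | 0 ≤ C ∧ ∀ x, kmsNorm s (η x) ≤ C * kmsNorm s x}

/-- Spectral (operator) norm of a matrix, i.e. the operator norm of the induced map
on Euclidean space. -/
def specNorm {d : ℕ} (x : Md d) : ℝ :=
  ‖(LinearMap.toContinuousLinearMap (Matrix.toEuclideanLin x))‖

/-- The positive square root `σ^{1/2}` of a positive definite state. -/
def sqrtm {d : ℕ} (σ : Md d) (hσ : σ.PosDef) : Md d :=
  hσ.posSemidef.1.eigenvectorUnitary.1 * diagonal ((↑) ∘ (√·) ∘ hσ.posSemidef.1.eigenvalues) *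
    (star hσ.posSemidef.1.eigenvectorUnitary : Md d)

/-- The quantum channel (Heisenberg picture) `Φ(x) = Σ_i V_i* x V_i`. -/
def channel {d : ℕ} {I : Type*} [Fintype I] (V : I → Md d) (x : Md d) : Md d :=
  ∑ i, (V i)ᴴ * x * V i

/-- The dual (Schrödinger picture) channel `Φ*(ρ) = Σ_i V_i ρ V_i*`. -/
def channelDual {d : ℕ} {I : Type*} [Fintype I] (V : I → Md d) (ρ : Md d) : Md d :=
  ∑ i, V i * ρ * (V i)ᴴ

/-- The KMS adjoint `Φ† = Γ_σ^{-1/2} ∘ Φ* ∘ Γ_σ^{1/2}` of the channel with Kraus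
operators `V`, where `s = σ^{1/2}`. -/
def channelKMSAdj {d : ℕ} {I : Type*} [Fintype I] (V : I → Md d) (s : Md d) (x : Md d) : Md d :=
  s⁻¹ * channelDual V (s * x * s) * s⁻¹

/-- Irreducibility of a completely positive map given by Kraus operators `W`:
for every nonzero `v` the span of all `W_{j_n} ⋯ W_{j_1} v` is everything. -/
def IrredKraus {d : ℕ} {J : Type*} (W : J → Md d) : Prop :=
  ∀ v : Fin d → ℂ, v ≠ 0 →
    Submodule.span ℂ {u : Fin d → ℂ | ∃ l : List J, u = ((l.map W).prod).mulVec v} = ⊤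

/-- The operator `V_{i_n} ⋯ V_{i_1}` associated with a measurement trajectory. -/
def trajOp {d : ℕ} {I : Type*} (V : I → Md d) {n : ℕ} (ω : Fin n → I) : Md d :=
  ((List.ofFn fun k => V (ω k)).reverse).prod

/-- The probability `tr(V_{i_n} ⋯ V_{i_1} ρ V_{i_1}* ⋯ V_{i_n}*)` of a trajectory. -/
def trajProb {d : ℕ} {I : Type*} (V : I → Md d) (ρ : Md d) {n : ℕ} (ω : Fin n → I) : ℝ :=
  ((trajOp V ω) * ρ * (trajOp V ω)ᴴ).trace.re

/-- The function `h(x) = 1/(√(1+x) + x/2 + 1)` from the Bernstein bound. -/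
def hfun (x : ℝ) : ℝ := (Real.sqrt (1 + x) + x / 2 + 1)⁻¹

/-- The norm `‖(Id - Φ)^{-1}|_F‖_∞` of the inverse of `Id - Φ` on
`F = {x : tr(σ x) = 0}`, with respect to the spectral norm. -/
def pseudoResNorm {d : ℕ} {I : Type*} [Fintype I] (V : I → Md d) (σ : Md d) : ℝ :=
  sInf {C : ℝ | 0 ≤ C ∧ ∀ x : Md d, (σ * x).trace = 0 →
    specNorm x ≤ C * specNorm (x - channel V x)}

/-- The deformed transition operator `Φ_u(x) = Σ_i e^{u f(i)} V_i* x V_i`. -/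
def phiU {d : ℕ} {I : Type*} [Fintype I] (V : I → Md d) (f : I → ℝ) (u : ℝ)
    (x : Md d) : Md d :=
  ∑ i, (Real.exp (u * f i) : ℂ) • ((V i)ᴴ * x * V i)

/-! ### Auxiliary lemmas -/

section Aux

variable {d : ℕ}

lemma kmsNorm_nonneg' (s x : Md d) : 0 ≤ kmsNorm s x := Real.sqrt_nonneg _

lemma kmsNorm_zero' (s : Md d) : kmsNorm s 0 = 0 := by simp [kmsNorm]

lemma kmsOpNorm_spec (s : Md d) (η : Md d → Md d) (hη0 : η 0 = 0)
    (hnorm0 : ∀ x, kmsNorm s x = 0 → x = 0)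
    (hbdd : ∃ C, 0 ≤ C ∧ ∀ x, kmsNorm s (η x) ≤ C * kmsNorm s x) :
    0 ≤ kmsOpNorm s η ∧ ∀ x, kmsNorm s (η x) ≤ kmsOpNorm s η * kmsNorm s x := by
  set S := {C : ℝ | 0 ≤ C ∧ ∀ x, kmsNorm s (η x) ≤ C * kmsNorm s x} with hS
  have hne : S.Nonempty := hbdd
  have hbb : BddBelow S := ⟨0, fun C hC => hC.1⟩
  have h0 : 0 ≤ sInf S := le_csInf hne fun C hC => hC.1
  refine ⟨h0, fun x => ?_⟩
  rcases eq_or_ne (kmsNorm s x) 0 with hx | hx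
  · rw [hnorm0 x hx, hη0, kmsNorm_zero', mul_zero]
  · have hxpos : 0 < kmsNorm s x := lt_of_le_of_ne (kmsNorm_nonneg' s x) (Ne.symm hx)
    have hlb : kmsNorm s (η x) / kmsNorm s x ≤ sInf S :=
      le_csInf hne fun C hC => (div_le_iff₀ hxpos).2 (hC.2 x)
    calc kmsNorm s (η x) = kmsNorm s (η x) / kmsNorm s x * kmsNorm s x := by
          field_simp
      _ ≤ sInf S * kmsNorm s x := mul_le_mul_of_nonneg_right hlb (le_of_lt hxpos)

lemma iter_bound (s : Md d) (η : Md d → Md d) (C : ℝ) (hC : 0 ≤ C)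
    (h : ∀ x, kmsNorm s (η x) ≤ C * kmsNorm s x) (n : ℕ) :
    kmsNorm s (η^[n] 1) ≤ C ^ n * kmsNorm s 1 := by
  induction n with
  | zero => simp
  | succ n ih =>
    rw [Function.iterate_succ_apply']
    calc kmsNorm s (η (η^[n] 1)) ≤ C * kmsNorm s (η^[n] 1) := h _
      _ ≤ C * (C ^ n * kmsNorm s 1) := mul_le_mul_of_nonneg_left ih hC
      _ = C ^ (n + 1) * kmsNorm s 1 := by ring

lemma phiU_zero {I : Type*} [Fintype I] (V : I → Md d) (f : I → ℝ) (u : ℝ) :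
    phiU V f u 0 = 0 := by simp [phiU]

section frob
attribute [local instance] Matrix.frobeniusSeminormedAddCommGroup
  Matrix.frobeniusNormedAddCommGroup Matrix.frobeniusIsBoundedSMul Matrix.frobeniusNormedSpace
  Matrix.frobeniusNormSMulClass

lemma entry_norm (z : ℂ) : ((starRingEnd ℂ) z * z).re = ‖z‖ ^ 2 := by
  rw [mul_comm, Complex.mul_conj]
  simp [Complex.normSq_eq_norm_sq, ← Complex.ofReal_pow]

lemma trace_entries (A B : Md d) :
    ((Aᴴ * B).trace).re = ∑ p : Fin d × Fin d, ((starRingEnd ℂ) (A p.1 p.2) * B p.1 p.2).re := by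
  rw [show (Aᴴ * B).trace = ∑ i, ∑ j, (starRingEnd ℂ) (A j i) * B j i by
    simp [Matrix.trace, Matrix.diag, Matrix.mul_apply, Matrix.conjTranspose_apply]]
  rw [Complex.re_sum]
  simp_rw [Complex.re_sum]
  rw [Finset.sum_comm, ← Finset.sum_product', Finset.univ_product_univ]

lemma frob_norm_sq (A : Md d) : ‖A‖ ^ 2 = ∑ p : Fin d × Fin d, ‖A p.1 p.2‖ ^ 2 := by
  have hr : ∀ x : ℝ, x ^ (2:ℝ) = x ^ 2 := fun x => by
    rw [show (2:ℝ) = ((2:ℕ):ℝ) by norm_num, Real.rpow_natCast]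
  have hn : ‖A‖ = (∑ i, ∑ j, ‖A i j‖ ^ 2) ^ (1/2 : ℝ) := by
    rw [Matrix.frobenius_norm_def]; simp_rw [hr]
  have hs : (0:ℝ) ≤ ∑ i, ∑ j, ‖A i j‖ ^ 2 := by positivity
  rw [hn, ← Real.rpow_natCast (_ ^ (1/2:ℝ)) 2, ← Real.rpow_mul hs]
  norm_num
  rw [← Finset.sum_product', Finset.univ_product_univ]

lemma frob_sq (A : Md d) : ((Aᴴ * A).trace).re = ‖A‖ ^ 2 := by
  rw [trace_entries, frob_norm_sq]
  exact Finset.sum_congr rfl fun p _ => entry_norm _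

lemma frob_cs (A B : Md d) : ((Aᴴ * B).trace).re ≤ ‖A‖ * ‖B‖ := by
  rw [trace_entries]
  have h1 : ∑ p : Fin d × Fin d, ((starRingEnd ℂ) (A p.1 p.2) * B p.1 p.2).re ≤
      ∑ p : Fin d × Fin d, ‖A p.1 p.2‖ * ‖B p.1 p.2‖ := by
    refine Finset.sum_le_sum fun p _ => ?_
    calc ((starRingEnd ℂ) (A p.1 p.2) * B p.1 p.2).re
        ≤ ‖(starRingEnd ℂ) (A p.1 p.2) * B p.1 p.2‖ := Complex.re_le_norm _
      _ = ‖A p.1 p.2‖ * ‖B p.1 p.2‖ := by rw [norm_mul, RCLike.norm_conj]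
  refine h1.trans ?_
  have h2 := Finset.sum_mul_sq_le_sq_mul_sq Finset.univ
    (fun p : Fin d × Fin d => ‖A p.1 p.2‖) (fun p => ‖B p.1 p.2‖)
  have hAB : (0:ℝ) ≤ ∑ p : Fin d × Fin d, ‖A p.1 p.2‖ * ‖B p.1 p.2‖ :=
    Finset.sum_nonneg fun p _ => mul_nonneg (norm_nonneg _) (norm_nonneg _)
  calc ∑ p : Fin d × Fin d, ‖A p.1 p.2‖ * ‖B p.1 p.2‖
      = Real.sqrt ((∑ p : Fin d × Fin d, ‖A p.1 p.2‖ * ‖B p.1 p.2‖) ^ 2) :=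
        (Real.sqrt_sq hAB).symm
    _ ≤ Real.sqrt ((∑ p : Fin d × Fin d, ‖A p.1 p.2‖ ^ 2) *
          ∑ p : Fin d × Fin d, ‖B p.1 p.2‖ ^ 2) := Real.sqrt_le_sqrt h2
    _ = ‖A‖ * ‖B‖ := by
        rw [← frob_norm_sq, ← frob_norm_sq, Real.sqrt_mul (sq_nonneg _),
          Real.sqrt_sq (norm_nonneg _), Real.sqrt_sq (norm_nonneg _)]

lemma kms_trace_eq (r x y : Md d) (hr : rᴴ = r) :
    ((r*r) * xᴴ * (r*r) * y).trace = ((r*x*r)ᴴ * (r*y*r)).trace := by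
  simp only [conjTranspose_mul, hr, mul_assoc]
  rw [Matrix.trace_mul_comm]
  simp only [mul_assoc]

lemma kmsNorm_eq (r : Md d) (hr : rᴴ = r) (x : Md d) : kmsNorm (r*r) x = ‖r*x*r‖ := by
  rw [kmsNorm, kms_trace_eq r x x hr, frob_sq, Real.sqrt_sq (norm_nonneg _)]

lemma kms_cs (r : Md d) (hr : rᴴ = r) (x y : Md d) :
    (((r*r) * xᴴ * (r*r) * y).trace).re ≤ kmsNorm (r*r) x * kmsNorm (r*r) y := by
  rw [kms_trace_eq r x y hr, kmsNorm_eq r hr, kmsNorm_eq r hr]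
  exact frob_cs _ _

lemma kms_norm0 (r rinv : Md d) (hr : rᴴ = r) (hrl : rinv * r = 1) (hrr : r * rinv = 1)
    (x : Md d) (hx : kmsNorm (r * r) x = 0) : x = 0 := by
  rw [kmsNorm_eq r hr] at hx
  have h0 : r * x * r = 0 := norm_eq_zero.mp hx
  have : rinv * (r * x * r) * rinv = x := by
    have h1 : ∀ Z : Md d, rinv * (r * Z) = Z := fun Z => by rw [← mul_assoc, hrl, one_mul]
    calc rinv * (r * x * r) * rinv = rinv * (r * (x * (r * rinv))) := by
          simp only [mul_assoc]
      _ = x := by rw [hrr, mul_one, h1]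
  rw [← this, h0, mul_zero, zero_mul]

lemma kms_bdd (r rinv : Md d) (hr : rᴴ = r) (hrl : rinv * r = 1) (hrr : r * rinv = 1)
    {I : Type*} [Fintype I] (V : I → Md d) (f : I → ℝ) (u : ℝ) :
    ∃ C, 0 ≤ C ∧ ∀ x, kmsNorm (r * r) (phiU V f u x) ≤ C * kmsNorm (r * r) x := by
  have h1 : ∀ Z : Md d, rinv * (r * Z) = Z := fun Z => by rw [← mul_assoc, hrl, one_mul]
  have h2 : ∀ Z : Md d, r * (rinv * Z) = Z := fun Z => by rw [← mul_assoc, hrr, one_mul]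
  refine ⟨∑ i, Real.exp (u * f i) * (‖r * (V i)ᴴ * rinv‖ * ‖rinv * (V i * r)‖), ?_, fun x => ?_⟩
  · refine Finset.sum_nonneg fun i _ => mul_nonneg (Real.exp_nonneg _)
      (mul_nonneg (norm_nonneg _) (norm_nonneg _))
  · rw [kmsNorm_eq r hr, kmsNorm_eq r hr]
    have expand : r * phiU V f u x * r =
        ∑ i, (Real.exp (u * f i) : ℂ) •
          ((r * (V i)ᴴ * rinv) * ((r * x * r) * (rinv * (V i * r)))) := by
      rw [phiU, Finset.mul_sum, Finset.sum_mul]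
      refine Finset.sum_congr rfl fun i _ => ?_
      rw [Matrix.mul_smul, Matrix.smul_mul]
      congr 1
      simp only [mul_assoc, h1, h2]
    rw [expand]
    refine (norm_sum_le _ _).trans ?_
    rw [Finset.sum_mul]
    refine Finset.sum_le_sum fun i _ => ?_
    rw [norm_smul]
    have hexp : ‖(Real.exp (u * f i) : ℂ)‖ = Real.exp (u * f i) := by
      rw [Complex.norm_real, Real.norm_eq_abs, abs_of_pos (Real.exp_pos _)]
    rw [hexp]
    have hm : ‖r * (V i)ᴴ * rinv * ((r * x * r) * (rinv * (V i * r)))‖ ≤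
        ‖r * (V i)ᴴ * rinv‖ * ‖rinv * (V i * r)‖ * ‖r * x * r‖ := by
      calc ‖r * (V i)ᴴ * rinv * ((r * x * r) * (rinv * (V i * r)))‖
          ≤ ‖r * (V i)ᴴ * rinv‖ * ‖(r * x * r) * (rinv * (V i * r))‖ :=
            Matrix.frobenius_norm_mul _ _
        _ ≤ ‖r * (V i)ᴴ * rinv‖ * (‖r * x * r‖ * ‖rinv * (V i * r)‖) :=
            mul_le_mul_of_nonneg_left (Matrix.frobenius_norm_mul _ _) (norm_nonneg _)
        _ = ‖r * (V i)ᴴ * rinv‖ * ‖rinv * (V i * r)‖ * ‖r * x * r‖ := by ring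
    calc Real.exp (u * f i) * ‖r * (V i)ᴴ * rinv * ((r * x * r) * (rinv * (V i * r)))‖
        ≤ Real.exp (u * f i) * (‖r * (V i)ᴴ * rinv‖ * ‖rinv * (V i * r)‖ * ‖r * x * r‖) :=
          mul_le_mul_of_nonneg_left hm (Real.exp_nonneg _)
      _ = Real.exp (u * f i) * (‖r * (V i)ᴴ * rinv‖ * ‖rinv * (V i * r)‖) * ‖r * x * r‖ := by
          ring

end frob

variable {I : Type*} [Fintype I]

lemma trajOp_cons (V : I → Md d) {n : ℕ} (i : I) (ω : Fin n → I) :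
    trajOp V (Fin.cons i ω) = trajOp V ω * V i := by
  simp [trajOp, List.ofFn_succ]

lemma phiU_iter (V : I → Md d) (f : I → ℝ) (u : ℝ) (n : ℕ) :
    (phiU V f u)^[n] 1 =
      ∑ ω : Fin n → I, (Real.exp (u * ∑ k, f (ω k)) : ℂ) • ((trajOp V ω)ᴴ * trajOp V ω) := by
  induction n with
  | zero =>
    simp [trajOp]
  | succ n ih =>
    rw [Function.iterate_succ_apply', ih]
    have hsum : ∑ ω : Fin (n+1) → I,
          (Real.exp (u * ∑ k, f (ω k)) : ℂ) • ((trajOp V ω)ᴴ * trajOp V ω)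
        = ∑ p : I × (Fin n → I),
            (Real.exp (u * ∑ k, f ((Fin.cons p.1 p.2 : Fin (n+1) → I) k)) : ℂ) •
            ((trajOp V (Fin.cons p.1 p.2 : Fin (n+1) → I))ᴴ *
              trajOp V (Fin.cons p.1 p.2 : Fin (n+1) → I)) :=
      (Fintype.sum_equiv (Fin.consEquiv (fun _ => I)) _ _ (fun p => rfl)).symm
    rw [hsum, Fintype.sum_prod_type]
    rw [phiU]
    refine Finset.sum_congr rfl fun i _ => ?_
    rw [Finset.mul_sum, Finset.sum_mul, Finset.smul_sum]
    refine Finset.sum_congr rfl fun ω _ => ?_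
    dsimp only
    rw [trajOp_cons V i ω, Matrix.mul_smul, Matrix.smul_mul, smul_smul]
    rw [show (∑ k : Fin (n+1), f ((Fin.cons i ω : Fin (n+1) → I) k))
        = f i + ∑ k : Fin n, f (ω k) by rw [Fin.sum_univ_succ]; simp]
    congr 1
    · rw [mul_add, Real.exp_add]
      push_cast
      ring
    · rw [Matrix.conjTranspose_mul]
      simp only [mul_assoc]

lemma unit_conj_mul (u : unitary (Md d)) (D E : Md d) :
    (u : Md d) * D * (star u : Md d) * ((u : Md d) * E * (star u : Md d))
      = (u : Md d) * (D * E) * (star u : Md d) := by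
  simp only [mul_assoc]
  rw [← mul_assoc (star u : Md d) (u : Md d), Unitary.coe_star_mul_self, one_mul]

lemma unit_conj_herm (u : unitary (Md d)) (g : Fin d → ℝ) :
    ((u : Md d) * diagonal (fun i => ((g i : ℝ) : ℂ)) * (star u : Md d))ᴴ
      = (u : Md d) * diagonal (fun i => ((g i : ℝ) : ℂ)) * (star u : Md d) := by
  simp [Matrix.conjTranspose_mul, Matrix.diagonal_conjTranspose, mul_assoc,
    ← Matrix.star_eq_conjTranspose]
  rw [Matrix.star_eq_conjTranspose, Matrix.diagonal_conjTranspose]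
  congr 3
  funext i
  simp

end Aux

/-- **Laplace transform of the additive output functional** (step 1 of the proof of
Theorem 3.1): `E_ρ[e^{u Σ_k f(X_k)}] = tr(ρ Φ_u^n(1)) ≤ N_ρ ‖Φ_u‖₂^n`. -/
theorem laplace_transform_output
    {d : ℕ} (hd : 1 ≤ d) {I : Type*} [Fintype I] [Nonempty I]
    (V : I → Md d) (hV : ∑ i, (V i)ᴴ * V i = 1)
    (σ : Md d) (hσ : σ.PosDef) (hσtr : σ.trace = 1)
    (hinv : channelDual V σ = σ)
    (f : I → ℝ) (u : ℝ)
    (ρ : Md d) (hρ : ρ.PosSemidef) (hρtr : ρ.trace = 1)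
    (n : ℕ) (hn : 1 ≤ n) :
    (∑ ω : Fin n → I,
        Real.exp (u * ∑ k, f (ω k)) * trajProb V ρ ω =
      ((ρ * (phiU V f u)^[n] 1).trace).re) ∧
    ((ρ * (phiU V f u)^[n] 1).trace).re ≤
      kmsNorm (sqrtm σ hσ) ((sqrtm σ hσ)⁻¹ * ρ * (sqrtm σ hσ)⁻¹) *
        (kmsOpNorm (sqrtm σ hσ) (phiU V f u)) ^ n := by
  classical
  constructor
  · -- Part 1
    rw [phiU_iter V f u n, Finset.mul_sum, Matrix.trace_sum, Complex.re_sum]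
    refine Finset.sum_congr rfl fun ω _ => ?_
    rw [Matrix.mul_smul, Matrix.trace_smul]
    have htr : (trajOp V ω * ρ * (trajOp V ω)ᴴ).trace
        = (ρ * ((trajOp V ω)ᴴ * trajOp V ω)).trace := by
      rw [Matrix.trace_mul_cycle, ← Matrix.trace_mul_comm]
    rw [trajProb, htr]
    rw [smul_eq_mul, Complex.re_ofReal_mul]
  · -- Part 2
    set s := sqrtm σ hσ with hsdef
    have hev : ∀ i, 0 ≤ hσ.posSemidef.1.eigenvalues i := hσ.posSemidef.eigenvalues_nonneg
    have hss : s * s = σ := by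
      rw [hsdef, sqrtm, unit_conj_mul, diagonal_mul_diagonal]
      conv_rhs => rw [hσ.posSemidef.1.spectral_theorem]
      rw [Unitary.conjStarAlgAut_apply]
      congr 1; congr 1; congr 1
      funext i
      simp only [Function.comp]
      rw [← Complex.ofReal_mul, Real.mul_self_sqrt (hev i)]
      rfl
    have hsH : sᴴ = s := unit_conj_herm _ _
    have hdetσ : IsUnit σ.det := (Matrix.isUnit_iff_isUnit_det σ).mp hσ.isUnit
    have hdets : IsUnit s.det := by
      have h : σ.det = s.det * s.det := by rw [← hss, Matrix.det_mul]
      exact isUnit_of_mul_isUnit_left (h ▸ hdetσ)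
    set r : Md d := hσ.posSemidef.1.eigenvectorUnitary.1 *
      diagonal ((↑) ∘ (√·) ∘ (√·) ∘ hσ.posSemidef.1.eigenvalues) *
      (star hσ.posSemidef.1.eigenvectorUnitary : Md d) with hrdef
    have hrH : rᴴ = r := unit_conj_herm _ _
    have hrr : r * r = s := by
      rw [hrdef, hsdef, sqrtm, unit_conj_mul, diagonal_mul_diagonal]
      congr 1; congr 1; congr 1
      funext i
      simp only [Function.comp]
      rw [← Complex.ofReal_mul, Real.mul_self_sqrt (Real.sqrt_nonneg _)]
    have hdetr : IsUnit r.det := by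
      have h : s.det = r.det * r.det := by rw [← hrr, Matrix.det_mul]
      exact isUnit_of_mul_isUnit_left (h ▸ hdets)
    have hrl : r⁻¹ * r = 1 := Matrix.nonsing_inv_mul r hdetr
    have hrri : r * r⁻¹ = 1 := Matrix.mul_nonsing_inv r hdetr
    obtain ⟨hop0, hopspec⟩ := kmsOpNorm_spec s (phiU V f u) (phiU_zero V f u)
      (fun x hx => kms_norm0 r r⁻¹ hrH hrl hrri x (by rwa [hrr]))
      (by
        obtain ⟨C, hC0, hC⟩ := kms_bdd r r⁻¹ hrH hrl hrri V f u
        exact ⟨C, hC0, fun x => by rw [← hrr]; exact hC x⟩)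
    -- pairing identity
    have hx0H : (s⁻¹ * ρ * s⁻¹)ᴴ = s⁻¹ * ρ * s⁻¹ := by
      rw [Matrix.conjTranspose_mul, Matrix.conjTranspose_mul,
        Matrix.conjTranspose_nonsing_inv, hsH, hρ.1, mul_assoc]
    have hconj : s * (s⁻¹ * ρ * s⁻¹) * s = ρ := by
      have hsl : s⁻¹ * s = 1 := Matrix.nonsing_inv_mul s hdets
      have hsr : s * s⁻¹ = 1 := Matrix.mul_nonsing_inv s hdets
      calc s * (s⁻¹ * ρ * s⁻¹) * s = s * s⁻¹ * ρ * (s⁻¹ * s) := by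
            simp only [mul_assoc]
        _ = ρ := by rw [hsl, hsr, one_mul, mul_one]
    have hpair : (ρ * (phiU V f u)^[n] 1).trace
        = (s * (s⁻¹ * ρ * s⁻¹)ᴴ * s * ((phiU V f u)^[n] 1)).trace := by
      rw [hx0H, hconj]
    -- Cauchy-Schwarz
    have hcs : ((s * (s⁻¹ * ρ * s⁻¹)ᴴ * s * ((phiU V f u)^[n] 1)).trace).re ≤
        kmsNorm s (s⁻¹ * ρ * s⁻¹) * kmsNorm s ((phiU V f u)^[n] 1) := by
      rw [← hrr]
      exact kms_cs r hrH _ _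
    -- norm of 1
    have hone : kmsNorm s 1 = 1 := by
      rw [kmsNorm]
      rw [show s * (1 : Md d)ᴴ * s * 1 = σ by
        rw [Matrix.conjTranspose_one, mul_one, mul_one, hss]]
      rw [hσtr]
      simp
    have hiter : kmsNorm s ((phiU V f u)^[n] 1) ≤ kmsOpNorm s (phiU V f u) ^ n :=
      (iter_bound s (phiU V f u) _ hop0 hopspec n).trans (by rw [hone, mul_one])
    calc ((ρ * (phiU V f u)^[n] 1).trace).re
        ≤ kmsNorm s (s⁻¹ * ρ * s⁻¹) * kmsNorm s ((phiU V f u)^[n] 1) := by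
          rw [hpair]; exact hcs
      _ ≤ kmsNorm s (s⁻¹ * ρ * s⁻¹) * kmsOpNorm s (phiU V f u) ^ n :=
          mul_le_mul_of_nonneg_left hiter (kmsNorm_nonneg' _ _)
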